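/- Let Δ be a simplicial complex such that for every face F of Δ, the link lk_Δ(F) is empty, zero-dimensional, or connected. Then Δ is pure, i.e., all facets (maximal faces) of Δ have the same dimension. -/

import Mathlib

variable {V : Type*} [DecidableEq V] [Fintype V]

/-- A simplicial complex on the vertex set `V`: a collection of finite sets
closed under taking subsets. -/
def IsSimplicialComplex (Δ : Set (Finset V)) : Prop :=
  ∀ F ∈ Δ, ∀ G : Finset V, G ⊆ F → G ∈ Δ

/-- The link of a face `F`: `lk_Δ(F) = {G ∈ Δ : G ∪ F ∈ Δ, G ∩ F = ∅}`. -/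
def link (Δ : Set (Finset V)) (F : Finset V) : Set (Finset V) :=
  {G | G ∪ F ∈ Δ ∧ Disjoint G F}

/-- A facet: a maximal face of `Δ`. -/
def IsFacet (Δ : Set (Finset V)) (F : Finset V) : Prop :=
  F ∈ Δ ∧ ∀ G ∈ Δ, F ⊆ G → F = G

/-- A complex is connected if any two of its vertices are joined by a path of
edges (1-dimensional faces) of the complex. -/
def ComplexConnected (Δ : Set (Finset V)) : Prop :=
  ∀ x y : V, ({x} : Finset V) ∈ Δ → ({y} : Finset V) ∈ Δ →
    Relation.ReflTransGen (fun a b : V => ({a, b} : Finset V) ∈ Δ ∧ a ≠ b) x y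

lemma exists_facet (Δ : Set (Finset V)) (F : Finset V) (hF : F ∈ Δ) :
    ∃ G, IsFacet Δ G ∧ F ⊆ G := by
  have hfin : ({G : Finset V | G ∈ Δ ∧ F ⊆ G}).Finite := Set.toFinite _
  obtain ⟨a, ha, hmax⟩ := Set.Finite.exists_maximalFor Finset.card _ hfin ⟨F, hF, subset_rfl⟩
  refine ⟨a, ⟨ha.1, ?_⟩, ha.2⟩
  intro G hG hsub
  have hGs : G ∈ {G : Finset V | G ∈ Δ ∧ F ⊆ G} := ⟨hG, ha.2.trans hsub⟩
  exact Finset.eq_of_subset_of_card_le hsub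
    (hmax hGs (Finset.card_le_card hsub))

lemma link_isComplex {Δ : Set (Finset V)} (hΔ : IsSimplicialComplex Δ) (S : Finset V) :
    IsSimplicialComplex (link Δ S) := by
  intro F hF G hGF
  exact ⟨hΔ _ hF.1 _ (Finset.union_subset_union_left hGF),
    Finset.disjoint_of_subset_left hGF hF.2⟩

lemma link_link {Δ : Set (Finset V)} {S F : Finset V} (hF : F ∈ link Δ S) :
    link (link Δ S) F = link Δ (F ∪ S) := by
  ext G
  simp only [link, Set.mem_setOf_eq, Finset.union_assoc, Finset.disjoint_union_right,
    Finset.disjoint_union_left]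
  constructor
  · rintro ⟨⟨h1, h2, _⟩, h3⟩; exact ⟨h1, h3, h2⟩
  · rintro ⟨h1, h2, h3⟩; exact ⟨⟨h1, h3, hF.2⟩, h2⟩

lemma facet_link_of_facet {Δ : Set (Finset V)} {v : V} {H : Finset V}
    (hH : IsFacet Δ H) (hv : v ∈ H) : IsFacet (link Δ {v}) (H \ {v}) := by
  have hsub : ({v} : Finset V) ⊆ H := Finset.singleton_subset_iff.2 hv
  have hun : H \ {v} ∪ {v} = H := Finset.sdiff_union_of_subset hsub
  constructor
  · exact ⟨by rw [hun]; exact hH.1, Finset.sdiff_disjoint⟩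
  · intro G hG hsubG
    have hHG : H ⊆ G ∪ {v} := by
      rw [← hun]; exact Finset.union_subset_union_left hsubG
    have := hH.2 _ hG.1 hHG
    rw [this, Finset.union_sdiff_right, Finset.sdiff_eq_self_of_disjoint hG.2]

lemma facet_link_eq {Δ : Set (Finset V)} (hΔ : IsSimplicialComplex Δ) {v : V}
    {K : Finset V} (hK : IsFacet (link Δ {v}) K) :
    ∃ H, IsFacet Δ H ∧ v ∈ H ∧ K = H \ {v} := by
  obtain ⟨H, hH, hsub⟩ := exists_facet Δ (K ∪ {v}) hK.1.1
  have hvH : v ∈ H := hsub (Finset.mem_union_right _ (Finset.mem_singleton_self v))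
  have hHv : H \ {v} ∈ link Δ {v} := by
    refine ⟨?_, Finset.sdiff_disjoint⟩
    rw [Finset.sdiff_union_of_subset (Finset.singleton_subset_iff.2 hvH)]
    exact hH.1
  have hKsub : K ⊆ H \ {v} := by
    intro a ha
    refine Finset.mem_sdiff.2 ⟨hsub (Finset.mem_union_left _ ha), ?_⟩
    intro hav
    exact (Finset.disjoint_singleton_right.1 hK.1.2) (Finset.mem_singleton.1 hav ▸ ha)
  exact ⟨H, hH, hvH, hK.2 _ hHv hKsub⟩

lemma pure_aux : ∀ n : ℕ, ∀ Δ : Set (Finset V), IsSimplicialComplex Δ →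
    (∀ F ∈ Δ, link Δ F ⊆ {∅} ∨ (∀ G ∈ link Δ F, G.card ≤ 1) ∨
      ComplexConnected (link Δ F)) →
    (∀ F, IsFacet Δ F → F.card ≤ n) →
    ∀ F G, IsFacet Δ F → IsFacet Δ G → F.card = G.card := by
  intro n
  induction n with
  | zero =>
    intro Δ _ _ hb F G hF hG
    have := hb F hF; have := hb G hG; omega
  | succ n ih =>
    intro Δ hΔ hlink hb F G hF hG
    by_cases hFe : F = ∅
    · subst hFe; rw [hF.2 G hG.1 (Finset.empty_subset G)]
    by_cases hGe : G = ∅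
    · subst hGe; rw [hG.2 F hF.1 (Finset.empty_subset F)]
    have h0 : (∅ : Finset V) ∈ Δ := hΔ F hF.1 ∅ (Finset.empty_subset F)
    have linkempty : link Δ ∅ = Δ := by
      ext G; simp [link]
    have hl0 := hlink ∅ h0
    rw [linkempty] at hl0
    -- key: facets through a common vertex have equal card
    have key : ∀ v : V, ∀ A B, IsFacet Δ A → IsFacet Δ B → v ∈ A → v ∈ B →
        A.card = B.card := by
      intro v A B hA hB hvA hvB
      have hcomp := link_isComplex hΔ ({v} : Finset V)
      have hlk : ∀ K ∈ link Δ {v}, link (link Δ {v}) K ⊆ {∅} ∨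
          (∀ G ∈ link (link Δ {v}) K, G.card ≤ 1) ∨
          ComplexConnected (link (link Δ {v}) K) := by
        intro K hK
        rw [link_link hK]
        exact hlink (K ∪ {v}) hK.1
      have hbd : ∀ K, IsFacet (link Δ {v}) K → K.card ≤ n := by
        intro K hK
        obtain ⟨H, hH, hvH, hKH⟩ := facet_link_eq hΔ hK
        have h1 : H.card ≤ n + 1 := hb H hH
        have h2 : 0 < H.card := Finset.card_pos.2 ⟨v, hvH⟩
        rw [hKH, Finset.card_sdiff_of_subset (Finset.singleton_subset_iff.2 hvH),
          Finset.card_singleton]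
        omega
      have := ih (link Δ {v}) hcomp hlk hbd (A \ {v}) (B \ {v})
        (facet_link_of_facet hA hvA) (facet_link_of_facet hB hvB)
      rw [Finset.card_sdiff_of_subset (Finset.singleton_subset_iff.2 hvA),
        Finset.card_sdiff_of_subset (Finset.singleton_subset_iff.2 hvB)] at this
      have hA1 : 0 < A.card := Finset.card_pos.2 ⟨v, hvA⟩
      have hB1 : 0 < B.card := Finset.card_pos.2 ⟨v, hvB⟩
      simp only [Finset.card_singleton] at this
      omega
    rcases hl0 with h | h | h
    · exact absurd (h hF.1) hFe
    · have h1 : F.card = 1 :=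
        le_antisymm (h F hF.1) (Finset.one_le_card.2 (Finset.nonempty_of_ne_empty hFe))
      have h2 : G.card = 1 :=
        le_antisymm (h G hG.1) (Finset.one_le_card.2 (Finset.nonempty_of_ne_empty hGe))
      rw [h1, h2]
    · obtain ⟨x, hx⟩ := Finset.nonempty_of_ne_empty hFe
      obtain ⟨y, hy⟩ := Finset.nonempty_of_ne_empty hGe
      have hxΔ : ({x} : Finset V) ∈ Δ := hΔ F hF.1 _ (Finset.singleton_subset_iff.2 hx)
      have hyΔ : ({y} : Finset V) ∈ Δ := hΔ G hG.1 _ (Finset.singleton_subset_iff.2 hy)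
      have path := h x y hxΔ hyΔ
      have trans : ∀ z, Relation.ReflTransGen
          (fun a b : V => ({a, b} : Finset V) ∈ Δ ∧ a ≠ b) x z →
          ∀ B, IsFacet Δ B → z ∈ B → F.card = B.card := by
        intro z hz
        induction hz with
        | refl => intro B hB hxB; exact key x F B hF hB hx hxB
        | tail _ hbc ihp =>
          rename_i b c _
          intro B hB hcB
          obtain ⟨H, hH, hsub⟩ := exists_facet Δ {b, c} hbc.1
          have hbH : b ∈ H := hsub (Finset.mem_insert_self b {c})
          have hcH : c ∈ H := hsub (Finset.mem_insert_of_mem (Finset.mem_singleton_self c))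
          calc F.card = H.card := ihp H hH hbH
            _ = B.card := key c H B hH hB hcH hcB
      exact trans y path G hG hy


/-- If the link of every face of `Δ` is empty, zero-dimensional, or connected,
then `Δ` is pure: all facets have the same dimension (cardinality). -/
theorem stmt_0 (Δ : Set (Finset V)) (hΔ : IsSimplicialComplex Δ)
    (hlink : ∀ F ∈ Δ, link Δ F ⊆ {∅} ∨ (∀ G ∈ link Δ F, G.card ≤ 1) ∨
      ComplexConnected (link Δ F)) :
    ∀ F G : Finset V, IsFacet Δ F → IsFacet Δ G → F.card = G.card := by
  intro F G hF hG
  exact pure_aux (Fintype.card V) Δ hΔ hlink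
    (fun F _ => Finset.card_le_univ F) F G hF hG
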